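/- Let Φ : [0,∞) → [0,∞) be differentiable with M := sup_{s ≥ 0} |Φ'(s)| < ∞. Then for every t ≥ 0 one has Φ(t)² ≤ max{Φ(0)², 2M} · (1 + ∫₀^t Φ(σ) dσ). -/

import Mathlib

open MeasureTheory Filter

/-- If `Φ : [0,∞) → [0,∞)` is differentiable with `|Φ'| ≤ M` on `[0,∞)`, then
for every `t ≥ 0` one has `Φ(t)² ≤ max{Φ(0)², 2M} (1 + ∫₀^t Φ(σ) dσ)`. -/
theorem stmt_10 (Φ : ℝ → ℝ) (hΦ : Differentiable ℝ Φ)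
    (hΦ0 : ∀ s ≥ (0 : ℝ), 0 ≤ Φ s)
    (M : ℝ) (hM : ∀ s ≥ (0 : ℝ), |deriv Φ s| ≤ M) :
    ∀ t ≥ (0 : ℝ),
      (Φ t) ^ 2 ≤ max ((Φ 0) ^ 2) (2 * M) * (1 + ∫ σ in (0:ℝ)..t, Φ σ) := by
  intro t ht
  set C := max ((Φ 0) ^ 2) (2 * M) with hC
  set g : ℝ → ℝ := fun s => (Φ s) ^ 2 - C * (1 + ∫ σ in (0:ℝ)..s, Φ σ) with hg
  have hcont : Continuous Φ := hΦ.continuous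
  have hderiv : ∀ s : ℝ, HasDerivAt g (2 * Φ s * deriv Φ s - C * Φ s) s := by
    intro s
    have h1 : HasDerivAt (fun x => (Φ x) ^ 2) (2 * Φ s ^ 1 * deriv Φ s) s :=
      (hΦ s).hasDerivAt.pow 2
    have hF : HasDerivAt (fun x => ∫ σ in (0:ℝ)..x, Φ σ) (Φ s) s :=
      intervalIntegral.integral_hasDerivAt_right
        (hcont.intervalIntegrable _ _)
        (hcont.stronglyMeasurableAtFilter _ _)
        hcont.continuousAt
    have h2 : HasDerivAt (fun x => C * (1 + ∫ σ in (0:ℝ)..x, Φ σ)) (C * Φ s) s := by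
      have := ((hasDerivAt_const s (1:ℝ)).add hF).const_mul C
      simpa using this
    rw [pow_one] at h1
    exact h1.sub h2
  have hanti : AntitoneOn g (Set.Icc 0 t) := by
    apply antitoneOn_of_deriv_nonpos (convex_Icc 0 t)
    · exact (Continuous.continuousOn (by
        fun_prop) : ContinuousOn g (Set.Icc 0 t))
    · intro x hx
      exact (hderiv x).differentiableAt.differentiableWithinAt
    · intro x hx
      rw [(hderiv x).deriv]
      have hx0 : (0:ℝ) ≤ x := by
        rw [interior_Icc] at hx
        exact le_of_lt hx.1
      have h1 : 0 ≤ Φ x := hΦ0 x hx0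
      have h2 : deriv Φ x ≤ M := (abs_le.mp (hM x hx0)).2
      have h3 : 2 * M ≤ C := le_max_right _ _
      nlinarith
  have h0t : g t ≤ g 0 := hanti (Set.left_mem_Icc.mpr ht) (Set.right_mem_Icc.mpr ht) ht
  have hg0 : g 0 ≤ 0 := by
    simp only [hg, intervalIntegral.integral_same]
    have : (Φ 0) ^ 2 ≤ C := le_max_left _ _
    linarith
  have := h0t.trans hg0
  simp only [hg] at this
  linarith
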